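/- Under the hypotheses of the previous virtual adaptation setup (θ' = S(θ), θ̂' = S(θ̂) + H⁻¹(κ(t)²+1)A(t)ᵀ(A(t)(θ−θ̂)+ε(t)), with H = Hᵀ > 0, H·DS + DSᵀH ≤ 0 pointwise, ε ∈ L², κ·ε ∈ L²), the functions t ↦ A(t)(θ(t)−θ̂(t)) and t ↦ κ(t)A(t)(θ(t)−θ̂(t)) both belong to L². -/

import Mathlib

open MeasureTheory Set Matrix

/-- Squared Euclidean norm. -/
def esq {n : ℕ} (v : Fin n → ℝ) : ℝ := ∑ i, (v i) ^ 2

/-- Jacobian of S at z. -/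
noncomputable def jac {d : ℕ} (S : (Fin d → ℝ) → (Fin d → ℝ)) (z : Fin d → ℝ) :
    Matrix (Fin d) (Fin d) ℝ :=
  Matrix.of fun i j => fderiv ℝ S z (Pi.single j 1) i

lemma esq_nonneg {n : ℕ} (v : Fin n → ℝ) : 0 ≤ esq v :=
  Finset.sum_nonneg fun i _ => sq_nonneg _

lemma esq_smul {n : ℕ} (c : ℝ) (v : Fin n → ℝ) : esq (c • v) = c ^ 2 * esq v := by
  simp [esq, Finset.mul_sum, mul_pow]

lemma esq_sub_le {n : ℕ} (u v : Fin n → ℝ) : esq (u - v) ≤ 2 * esq u + 2 * esq v := by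
  have : ∀ i, (u i - v i) ^ 2 ≤ 2 * (u i) ^ 2 + 2 * (v i) ^ 2 := by
    intro i; nlinarith [sq_nonneg (u i + v i)]
  calc esq (u - v) = ∑ i, (u i - v i) ^ 2 := by simp [esq]
    _ ≤ ∑ i, (2 * (u i) ^ 2 + 2 * (v i) ^ 2) := Finset.sum_le_sum fun i _ => this i
    _ = 2 * esq u + 2 * esq v := by simp [esq, Finset.sum_add_distrib, Finset.mul_sum]

lemma esq_eq_dot {n : ℕ} (v : Fin n → ℝ) : esq v = v ⬝ᵥ v := by
  simp [esq, dotProduct, sq]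

lemma continuous_esq {n : ℕ} {f : ℝ → Fin n → ℝ} (hf : Continuous f) :
    Continuous fun t => esq (f t) := by
  unfold esq
  exact continuous_finset_sum _ fun i _ => ((continuous_apply i).comp hf).pow 2

lemma dot_symm {d : ℕ} {H : Matrix (Fin d) (Fin d) ℝ} (hH : H.IsSymm)
    (v w : Fin d → ℝ) : v ⬝ᵥ H.mulVec w = w ⬝ᵥ H.mulVec v := by
  simp only [dotProduct, mulVec, Finset.mul_sum]
  rw [Finset.sum_comm]
  refine Finset.sum_congr rfl fun i _ => Finset.sum_congr rfl fun j _ => ?_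
  rw [hH.apply j i]; ring

lemma jac_mulVec {d : ℕ} {S : (Fin d → ℝ) → (Fin d → ℝ)} (hS : ContDiff ℝ 1 S)
    (z v : Fin d → ℝ) : (jac S z).mulVec v = fderiv ℝ S z v := by
  have hv : v = ∑ j, v j • (Pi.single j 1 : Fin d → ℝ) := by
    funext i
    simp [Pi.single_apply, Finset.sum_apply]
  conv_rhs => rw [hv]
  rw [map_sum]
  funext i
  simp only [mulVec, dotProduct, jac, Matrix.of_apply, Finset.sum_apply, Pi.smul_apply,
    _root_.map_smul, smul_eq_mul]
  exact Finset.sum_congr rfl fun j _ => mul_comm _ _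

lemma hasDerivAt_quadform {d : ℕ} (H : Matrix (Fin d) (Fin d) ℝ) (hH : H.IsSymm)
    {e : ℝ → Fin d → ℝ} {e' : Fin d → ℝ} {t : ℝ} (he : HasDerivAt e e' t) :
    HasDerivAt (fun s => e s ⬝ᵥ H.mulVec (e s)) (2 * (e t ⬝ᵥ H.mulVec e')) t := by
  have hcomp : ∀ i, HasDerivAt (fun s => e s i) (e' i) t := fun i => hasDerivAt_pi.mp he i
  have key : HasDerivAt (fun s => ∑ i, ∑ j, e s i * H i j * e s j)
      (∑ i, ∑ j, (e' i * H i j * e t j + e t i * H i j * e' j)) t := by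
    refine HasDerivAt.fun_sum fun i _ => HasDerivAt.fun_sum fun j _ => ?_
    have := ((hcomp i).mul_const (H i j)).mul (hcomp j)
    exact this.congr_deriv (by ring)
  have hfun : (fun s => e s ⬝ᵥ H.mulVec (e s)) = fun s => ∑ i, ∑ j, e s i * H i j * e s j := by
    funext s; simp [dotProduct, mulVec, Finset.mul_sum, mul_assoc]
  have hval : (∑ i, ∑ j, (e' i * H i j * e t j + e t i * H i j * e' j))
      = 2 * (e t ⬝ᵥ H.mulVec e') := by
    have h1 : (∑ i, ∑ j, e' i * H i j * e t j) = e' ⬝ᵥ H.mulVec (e t) := by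
      simp [dotProduct, mulVec, Finset.mul_sum, mul_assoc]
    have h2 : (∑ i, ∑ j, e t i * H i j * e' j) = e t ⬝ᵥ H.mulVec e' := by
      simp [dotProduct, mulVec, Finset.mul_sum, mul_assoc]
    rw [Finset.sum_congr rfl fun i _ => Finset.sum_add_distrib,
      Finset.sum_add_distrib, h1, h2]
    linarith [dot_symm hH e' (e t)]
  rw [hfun, ← hval]; exact key

lemma mvt_nonpos {d : ℕ} (H : Matrix (Fin d) (Fin d) ℝ) (hH : H.IsSymm)
    {S : (Fin d → ℝ) → (Fin d → ℝ)} (hS : ContDiff ℝ 1 S)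
    (hneg : ∀ z : Fin d → ℝ, (-(H * jac S z + (jac S z)ᵀ * H)).PosSemidef)
    (x e : Fin d → ℝ) : e ⬝ᵥ H.mulVec (S (x + e) - S x) ≤ 0 := by
  set g : ℝ → ℝ := fun s => e ⬝ᵥ H.mulVec (S (x + s • e)) with hgdef
  have hline : ∀ s : ℝ, HasDerivAt (fun s : ℝ => x + s • e) e s := by
    intro s
    simpa using ((hasDerivAt_id s).smul_const e).const_add x
  have hg : ∀ s, HasDerivAt g (e ⬝ᵥ H.mulVec ((jac S (x + s • e)).mulVec e)) s := by
    intro s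
    have h1 : HasDerivAt (fun s : ℝ => S (x + s • e)) (fderiv ℝ S (x + s • e) e) s :=
      ((hS.differentiable one_ne_zero (x + s • e)).hasFDerivAt).comp_hasDerivAt s (hline s)
    have h2 : ∀ i, HasDerivAt (fun s : ℝ => S (x + s • e) i)
        (fderiv ℝ S (x + s • e) e i) s := fun i => hasDerivAt_pi.mp h1 i
    have h3 : HasDerivAt (fun s : ℝ => ∑ j, S (x + s • e) j * H.mulVec e j)
        (∑ j, fderiv ℝ S (x + s • e) e j * H.mulVec e j) s :=
      HasDerivAt.fun_sum fun j _ => (h2 j).mul_const _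
    have hfun : g = fun s : ℝ => ∑ j, S (x + s • e) j * H.mulVec e j := by
      funext s
      rw [hgdef]
      exact dot_symm hH _ _
    have hval : (∑ j, fderiv ℝ S (x + s • e) e j * H.mulVec e j)
        = e ⬝ᵥ H.mulVec ((jac S (x + s • e)).mulVec e) := by
      rw [jac_mulVec hS, dot_symm hH]; rfl
    rw [hfun, ← hval]; exact h3
  have hg' : ∀ s, deriv g s ≤ 0 := by
    intro s
    rw [(hg s).deriv]
    set z := x + s • e
    set J := jac S z
    have hps := (hneg z).dotProduct_mulVec_nonneg e
    rw [star_trivial] at hps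
    have hexp : e ⬝ᵥ (-(H * J + Jᵀ * H)).mulVec e
        = -(2 * (e ⬝ᵥ H.mulVec (J.mulVec e))) := by
      have h1 : e ⬝ᵥ (H * J).mulVec e = e ⬝ᵥ H.mulVec (J.mulVec e) := by
        rw [← mulVec_mulVec]
      have h2 : e ⬝ᵥ (Jᵀ * H).mulVec e = e ⬝ᵥ H.mulVec (J.mulVec e) := by
        rw [← mulVec_mulVec, dotProduct_mulVec, vecMul_transpose]
        exact dot_symm hH _ _
      rw [neg_mulVec, dotProduct_neg, add_mulVec, dotProduct_add, h1, h2]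
      ring
    rw [hexp] at hps
    linarith
  have hanti : Antitone g := antitone_of_deriv_nonpos
    (fun s => (hg s).differentiableAt) hg'
  have := hanti (show (0:ℝ) ≤ 1 by norm_num)
  rw [hgdef] at this
  simp only [one_smul, zero_smul, add_zero] at this
  rw [Matrix.mulVec_sub, dotProduct_sub]
  linarith

lemma dot_self_add {n : ℕ} (u v : Fin n → ℝ) :
    u ⬝ᵥ (u + v) = esq (u + (2:ℝ)⁻¹ • v) - esq v / 4 := by
  unfold esq
  rw [dotProduct, Finset.sum_div, ← Finset.sum_sub_distrib]
  refine Finset.sum_congr rfl fun i _ => ?_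
  simp only [Pi.add_apply, Pi.smul_apply, smul_eq_mul]
  ring

/-- under the virtual adaptation dynamics, A(θ−θ̂) and κ·A(θ−θ̂)
belong to L². -/
theorem virtual_adaptation_L2 {n d : ℕ}
    (H : Matrix (Fin d) (Fin d) ℝ) (hHsymm : H.IsSymm) (hHpos : H.PosDef)
    (S : (Fin d → ℝ) → (Fin d → ℝ)) (hS : ContDiff ℝ 1 S)
    (hneg : ∀ z : Fin d → ℝ, (-(H * jac S z + (jac S z)ᵀ * H)).PosSemidef)
    (A : ℝ → Matrix (Fin n) (Fin d) ℝ) (hA : Continuous A)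
    (κ : ℝ → ℝ) (hκ : Continuous κ)
    (ε : ℝ → Fin n → ℝ) (hε : Continuous ε)
    (hεL2 : IntegrableOn (fun t => esq (ε t)) (Ici (0 : ℝ)))
    (hκεL2 : IntegrableOn (fun t => esq (κ t • ε t)) (Ici (0 : ℝ)))
    (θ θhat : ℝ → Fin d → ℝ)
    (hθ : ∀ t, HasDerivAt θ (S (θ t)) t)
    (hθhat : ∀ t, HasDerivAt θhat
      (S (θhat t) +
        H⁻¹.mulVec ((κ t ^ 2 + 1) •
          (A t)ᵀ.mulVec ((A t).mulVec (θ t - θhat t) + ε t))) t) :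
    IntegrableOn (fun t => esq ((A t).mulVec (θ t - θhat t))) (Ici (0 : ℝ)) ∧
    IntegrableOn (fun t => κ t ^ 2 * esq ((A t).mulVec (θ t - θhat t)))
      (Ici (0 : ℝ)) := by
  have hHinv : H * H⁻¹ = 1 :=
    H.mul_nonsing_inv (isUnit_iff_ne_zero.2 hHpos.det_pos.ne')
  set e : ℝ → Fin d → ℝ := fun t => θ t - θhat t with he_def
  set e' : ℝ → Fin d → ℝ := fun t =>
    S (θ t) - S (θhat t) -
      H⁻¹.mulVec ((κ t ^ 2 + 1) • (A t)ᵀ.mulVec ((A t).mulVec (e t) + ε t)) with he'_def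
  have hederiv : ∀ t, HasDerivAt e (e' t) t := by
    intro t
    have h := (hθ t).sub (hθhat t)
    exact h.congr_deriv (by rw [he'_def, he_def]; abel)
  -- continuity
  have hθd : Differentiable ℝ θ := fun t => (hθ t).differentiableAt
  have hθhatd : Differentiable ℝ θhat := fun t => (hθhat t).differentiableAt
  have hθc : Continuous θ := hθd.continuous
  have hθhatc : Continuous θhat := hθhatd.continuous
  have hec : Continuous e := hθc.sub hθhatc
  have hAe : Continuous fun t => (A t).mulVec (e t) := hA.matrix_mulVec hec
  have hinner : Continuous fun t => (A t)ᵀ.mulVec ((A t).mulVec (e t) + ε t) :=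
    hA.matrix_transpose.matrix_mulVec (hAe.add hε)
  have he'c : Continuous e' := by
    rw [he'_def]
    exact ((hS.continuous.comp hθc).sub (hS.continuous.comp hθhatc)).sub
      (continuous_const.matrix_mulVec (((hκ.pow 2).add continuous_const).smul hinner))
  set V : ℝ → ℝ := fun t => e t ⬝ᵥ H.mulVec (e t) with hV_def
  set D : ℝ → ℝ := fun t => 2 * (e t ⬝ᵥ H.mulVec (e' t)) with hD_def
  have hVd : ∀ t, HasDerivAt V (D t) t := fun t => hasDerivAt_quadform H hHsymm (hederiv t)
  have hVnonneg : ∀ t, 0 ≤ V t := fun t => by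
    simpa using hHpos.posSemidef.dotProduct_mulVec_nonneg (e t)
  have hDc : Continuous D :=
    continuous_const.mul (hec.dotProduct (continuous_const.matrix_mulVec he'c))
  set W : ℝ → ℝ := fun t =>
    2 * (κ t ^ 2 + 1) * esq ((A t).mulVec (e t) + (2:ℝ)⁻¹ • ε t) with hW_def
  set g : ℝ → ℝ := fun t => ((κ t ^ 2 + 1) / 2) * esq (ε t) with hg_def
  have hWnonneg : ∀ t, 0 ≤ W t := fun t => by
    have := esq_nonneg ((A t).mulVec (e t) + (2:ℝ)⁻¹ • ε t)
    have := sq_nonneg (κ t)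
    rw [hW_def]
    positivity
  have hWc : Continuous W :=
    (continuous_const.mul ((hκ.pow 2).add continuous_const)).mul
      (continuous_esq (hAe.add (hε.const_smul (2:ℝ)⁻¹)))
  have hgc : Continuous g :=
    (((hκ.pow 2).add continuous_const).div_const 2).mul (continuous_esq hε)
  have hgL2 : IntegrableOn g (Ici (0:ℝ)) := by
    have heq : g = fun t => (esq (κ t • ε t) + esq (ε t)) / 2 := by
      funext t; rw [hg_def, esq_smul]; ring
    rw [heq]
    exact (hκεL2.add hεL2).div_const 2
  -- key pointwise derivative bound
  have hkey : ∀ t, D t ≤ -W t + g t := by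
    intro t
    have hsplit : e t ⬝ᵥ H.mulVec (e' t)
        = e t ⬝ᵥ H.mulVec (S (θ t) - S (θhat t)) -
          (κ t ^ 2 + 1) * (e t ⬝ᵥ (A t)ᵀ.mulVec ((A t).mulVec (e t) + ε t)) := by
      rw [he'_def]
      simp only [Matrix.mulVec_sub, dotProduct_sub, Matrix.mulVec_mulVec, ← Matrix.mul_assoc,
        hHinv, Matrix.one_mul, Matrix.one_mulVec, Matrix.mulVec_smul, dotProduct_smul,
        smul_eq_mul]
    have hσ : e t ⬝ᵥ H.mulVec (S (θ t) - S (θhat t)) ≤ 0 := by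
      have h := mvt_nonpos H hHsymm hS hneg (θhat t) (e t)
      have hx : θhat t + e t = θ t := by funext i; simp [he_def]
      rwa [hx] at h
    have hquad : e t ⬝ᵥ (A t)ᵀ.mulVec ((A t).mulVec (e t) + ε t)
        = esq ((A t).mulVec (e t) + (2:ℝ)⁻¹ • ε t) - esq (ε t) / 4 := by
      rw [dotProduct_mulVec, vecMul_transpose, dot_self_add]
    have hE := esq_nonneg ((A t).mulVec (e t) + (2:ℝ)⁻¹ • ε t)
    show 2 * (e t ⬝ᵥ H.mulVec (e' t)) ≤
      -(2 * (κ t ^ 2 + 1) * esq ((A t).mulVec (e t) + (2:ℝ)⁻¹ • ε t)) +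
        (κ t ^ 2 + 1) / 2 * esq (ε t)
    rw [hsplit, hquad]
    nlinarith [hσ]
  set Cg : ℝ := ∫ t in Ici (0:ℝ), g t with hCg_def
  have hbound : ∀ b : ℝ, 0 ≤ b → (∫ t in (0:ℝ)..b, W t) ≤ V 0 + Cg := by
    intro b hb
    have hftc : (∫ t in (0:ℝ)..b, D t) = V b - V 0 :=
      intervalIntegral.integral_eq_sub_of_hasDerivAt (fun t _ => hVd t)
        (hDc.intervalIntegrable 0 b)
    have hmono : (∫ t in (0:ℝ)..b, W t) ≤ ∫ t in (0:ℝ)..b, (g t - D t) := by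
      apply intervalIntegral.integral_mono_on hb (hWc.intervalIntegrable 0 b)
        ((hgc.sub hDc).intervalIntegrable 0 b)
      intro t _
      show W t ≤ g t - D t
      linarith [hkey t]
    have hsub : (∫ t in (0:ℝ)..b, (g t - D t))
        = (∫ t in (0:ℝ)..b, g t) - ∫ t in (0:ℝ)..b, D t :=
      intervalIntegral.integral_sub (hgc.intervalIntegrable 0 b) (hDc.intervalIntegrable 0 b)
    have hgle : (∫ t in (0:ℝ)..b, g t) ≤ Cg := by
      rw [intervalIntegral.integral_of_le hb, hCg_def]
      apply setIntegral_mono_set hgL2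
      · exact Filter.Eventually.of_forall fun t => by
          have := esq_nonneg (ε t)
          have := sq_nonneg (κ t)
          rw [hg_def]; positivity
      · exact HasSubset.Subset.eventuallyLE fun x hx => le_of_lt hx.1
    have hVb := hVnonneg b
    linarith
  have hWL2 : IntegrableOn W (Ici (0:ℝ)) := by
    rw [integrableOn_Ici_iff_integrableOn_Ioi]
    apply integrableOn_Ioi_of_intervalIntegral_norm_bounded (V 0 + Cg) 0
      (b := fun r : ℝ => r) (l := Filter.atTop)
      (fun r => hWc.integrableOn_Ioc) Filter.tendsto_id
    filter_upwards [Filter.eventually_ge_atTop (0:ℝ)] with r hr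
    have hcong : (∫ t in (0:ℝ)..r, ‖W t‖) = ∫ t in (0:ℝ)..r, W t :=
      intervalIntegral.integral_congr fun t _ => Real.norm_of_nonneg (hWnonneg t)
    rw [hcong]
    exact hbound r hr
  have hεhalf : IntegrableOn (fun t => esq (ε t) / 2) (Ici (0:ℝ)) := hεL2.div_const 2
  have hκεhalf : IntegrableOn (fun t => esq (κ t • ε t) / 2) (Ici (0:ℝ)) := hκεL2.div_const 2
  constructor
  · refine Integrable.mono' (hWL2.add hεhalf)
      ((continuous_esq hAe).aestronglyMeasurable) ?_
    refine Filter.Eventually.of_forall fun t => ?_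
    rw [Real.norm_of_nonneg (esq_nonneg _)]
    have h1 := esq_sub_le ((A t).mulVec (e t) + (2:ℝ)⁻¹ • ε t) ((2:ℝ)⁻¹ • ε t)
    have h2 : (A t).mulVec (e t) + (2:ℝ)⁻¹ • ε t - (2:ℝ)⁻¹ • ε t = (A t).mulVec (e t) :=
      add_sub_cancel_right _ _
    rw [h2, esq_smul] at h1
    have hE := esq_nonneg ((A t).mulVec (e t) + (2:ℝ)⁻¹ • ε t)
    have hk := sq_nonneg (κ t)
    have hεn := esq_nonneg (ε t)
    simp only [hW_def, Pi.add_apply]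
    nlinarith
  · refine Integrable.mono' (hWL2.add hκεhalf)
      (((hκ.pow 2).mul (continuous_esq hAe)).aestronglyMeasurable) ?_
    refine Filter.Eventually.of_forall fun t => ?_
    have hk := sq_nonneg (κ t)
    have hAn := esq_nonneg ((A t).mulVec (e t))
    rw [Real.norm_of_nonneg (by positivity)]
    have h1 := esq_sub_le ((A t).mulVec (e t) + (2:ℝ)⁻¹ • ε t) ((2:ℝ)⁻¹ • ε t)
    have h2 : (A t).mulVec (e t) + (2:ℝ)⁻¹ • ε t - (2:ℝ)⁻¹ • ε t = (A t).mulVec (e t) :=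
      add_sub_cancel_right _ _
    rw [h2, esq_smul] at h1
    have h3 : esq (κ t • ε t) = κ t ^ 2 * esq (ε t) := esq_smul _ _
    have hE := esq_nonneg ((A t).mulVec (e t) + (2:ℝ)⁻¹ • ε t)
    have hεn := esq_nonneg (ε t)
    simp only [hW_def, Pi.add_apply]
    nlinarith
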